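/- Let q : K → M be a dense surjective frame homomorphism (a compactification map when ⊤ is a compact element of K), let p : Opens(EReal) → Opens(ℝ) be the frame homomorphism sending an open subset U of the extended reals EReal = ℝ ∪ {±∞} to U ∩ ℝ (i.e., the preimage of U under the coercion ℝ → EReal), and let h' : Opens(EReal) → K be a frame homomorphism. Then there exists a frame homomorphism h : Opens(ℝ) → M with h ∘ p = q ∘ h' if and only if q(h'(D)) = ⊤, where D is the open subset of EReal consisting of the finite points (the range of the coercion ℝ → EReal). -/

import Mathlib

open TopologicalSpace Set

/-- The compactification `p : Opens(EReal) → Opens(ℝ)`, the frame homomorphism of the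
inclusion of the reals in the extended reals, sending an open `U ⊆ EReal` to `U ∩ ℝ`. -/
noncomputable def pER : FrameHom (Opens EReal) (Opens ℝ) :=
  Opens.comap ⟨((↑) : ℝ → EReal), continuous_coe_real_ereal⟩

/-- The set of finite points of `EReal`, an open subset of the extended reals. -/
noncomputable def finitePoints : Opens EReal :=
  ⟨Set.range ((↑) : ℝ → EReal), by rw [EReal.range_coe_eq_Ioo]; exact isOpen_Ioo⟩

/-- Extension of an open set of reals to an open set of extended reals. -/
noncomputable def eER : Opens ℝ → Opens EReal := fun U =>
  ⟨((↑) : ℝ → EReal) '' U.1, EReal.isOpenEmbedding_coe.isOpenMap _ U.2⟩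

/-- Lemma 21(1): for a dense surjective frame homomorphism `q : K → M` and a frame
homomorphism `h' : Opens(EReal) → K`, there is a frame homomorphism `h : Opens(ℝ) → M`
with `h ∘ p = q ∘ h'` iff `q` sends the domain of reality of `h'` to `⊤`. -/
theorem drops_iff_domain_of_reality {K M : Type*} [Order.Frame K] [Order.Frame M]
    (q : FrameHom K M) (hdense : ∀ a : K, q a = ⊥ → a = ⊥)
    (hsurj : Function.Surjective q) (h' : FrameHom (Opens EReal) K) :
    (∃ h : FrameHom (Opens ℝ) M, h.comp pER = q.comp h') ↔ q (h' finitePoints) = ⊤ := by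
  have hinj : Function.Injective ((↑) : ℝ → EReal) := EReal.coe_injective
  constructor
  · rintro ⟨h, hh⟩
    have hp : pER finitePoints = ⊤ := by
      apply Opens.ext
      simp [pER, finitePoints, Opens.coe_comap]
    have := DFunLike.congr_fun hh finitePoints
    simp only [FrameHom.comp_apply, hp, map_top] at this
    exact this.symm
  · intro htop
    refine ⟨{ toFun := fun U => q (h' (eER U)),
              map_inf' := ?_, map_top' := ?_, map_sSup' := ?_ }, ?_⟩
    · intro U V
      have : eER (U ⊓ V) = eER U ⊓ eER V := by
        apply Opens.ext
        simp [eER, Set.image_inter hinj]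
      show q (h' (eER (U ⊓ V))) = q (h' (eER U)) ⊓ q (h' (eER V))
      rw [this, map_inf, map_inf]
    · have : eER ⊤ = finitePoints := by
        apply Opens.ext
        simp [eER, finitePoints, Set.image_univ]
      show q (h' (eER ⊤)) = ⊤
      rw [this, htop]
    · intro S
      have : eER (sSup S) = sSup (eER '' S) := by
        apply Opens.ext
        simp only [Opens.coe_sSup, eER, Set.image_sUnion]
        simp [Set.image_iUnion, Set.sUnion_image]
        rfl
      show q (h' (eER (sSup S))) = _
      rw [this, map_sSup, map_sSup]
      simp [Set.image_image]
    · apply FrameHom.ext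
      intro V
      have : eER (pER V) = V ⊓ finitePoints := by
        apply Opens.ext
        simp [eER, pER, finitePoints, Opens.coe_comap, Set.image_preimage_eq_inter_range]
      simp only [FrameHom.comp_apply]
      show q (h' (eER (pER V))) = q (h' V)
      rw [this, map_inf, map_inf, htop, inf_top_eq]
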